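/- For every links system L with links indexed as described, the m×m rational 0–1 matrix A — whose rows 1,…,k−1 are indexed by the cuts δ_L(Q_1),…,δ_L(Q_{k−1}), whose rows k,…,m are indexed by the cuts δ_L(N_1),…,δ_L(N_{n−1}), whose columns are indexed by the links ℓ_1,…,ℓ_m, and whose (r,c) entry is 1 if and only if link ℓ_c lies in the cut indexing row r — is nonsingular, i.e., det A ≠ 0 and A has rank m. -/
import Mathlib


open Finset

namespace CoverSmallCuts

/-- `nn k` is the number `n = 2 + k(k-1)/2` of nodes. -/
def nn (k : ℕ) : ℕ := 2 + k * (k - 1) / 2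

/-- `mm k` is the number `m = k(k-1)/2 + k` of links. -/
def mm (k : ℕ) : ℕ := k * (k - 1) / 2 + k

/-- The nested set `N_i = {1, …, i}`. -/
def Nset (i : ℕ) : Finset ℕ := Finset.Icc 1 i

/-- The Q-set `Q_j = {2+(j-1)k/2, …, 1+j·k/2}`. -/
def Qset (k j : ℕ) : Finset ℕ := Finset.Icc (2 + (j - 1) * (k / 2)) (1 + j * (k / 2))

/-- Capacity of the path edge `{i, i+1}` of the capacitated graph `G`. -/
def pathCap (k i : ℕ) : ℕ :=
  if i = 1 ∨ i = nn k - 1 then 2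
  else if ∃ j ∈ Finset.Icc 1 (k - 1), i ∈ Qset k j ∧ i + 1 ∈ Qset k j then 3
  else 1

/-- Capacity of the cut `δ(S)` in the capacitated graph `G`: the sum of the capacities
of the edges of `G` with exactly one endpoint in `S`. -/
def cutCap (k : ℕ) (S : Finset ℕ) : ℕ :=
  (∑ i ∈ Finset.Icc 1 (nn k - 1),
      if (i ∈ S) ↔ ((i + 1) ∈ S) then 0 else pathCap k i)
  + (∑ j ∈ Finset.Icc 1 (k - 1),
      if ((1 + (j - 1) * (k / 2)) ∈ S) ↔ ((2 + j * (k / 2)) ∈ S) then 0 else 1)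

/-- A links system: the `s,t`-paths `P_1, …, P_{k-1}` are recorded by the function
`node`, where `node i t` is the `t`-th node of the path `P_i` (for `1 ≤ i ≤ k-1` and
`0 ≤ t ≤ k/2 + 1`); the class `P_k` consists of the single link `{1, n}`. -/
structure LinksSystem (k : ℕ) where
  node : ℕ → ℕ → ℕ
  /-- each path `P_i` starts at `s = 1` -/
  node_first : ∀ i ∈ Finset.Icc 1 (k - 1), node i 0 = 1
  /-- each path `P_i` ends at `t = n` -/
  node_last : ∀ i ∈ Finset.Icc 1 (k - 1), node i (k / 2 + 1) = nn k
  /-- node indices strictly increase along each path -/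
  node_mono : ∀ i ∈ Finset.Icc 1 (k - 1), ∀ t ≤ k / 2, node i t < node i (t + 1)
  /-- every node in `{2, …, n-1}` is an internal node of exactly one of `P_1, …, P_{k-1}` -/
  cover : ∀ v ∈ Finset.Icc 2 (nn k - 1),
      ∃! i, i ∈ Finset.Icc 1 (k - 1) ∧ ∃ t ∈ Finset.Icc 1 (k / 2), node i t = v
  /-- `P_i` has an internal node in `Q_j` iff
  `(i ≤ j ≤ min(i+k/2-1, k-1))` or `(j < i and j ≤ i-k/2)` -/
  meetsQ : ∀ i ∈ Finset.Icc 1 (k - 1), ∀ j ∈ Finset.Icc 1 (k - 1),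
      ((∃ t ∈ Finset.Icc 1 (k / 2), node i t ∈ Qset k j) ↔
        ((i ≤ j ∧ j ≤ min (i + k / 2 - 1) (k - 1)) ∨ (j < i ∧ j ≤ i - k / 2)))

/-- The class `P_i` of links: the edge set of the path `P_i` for `i < k`,
and `{{1, n}}` for `i = k`. -/
def LinksSystem.P {k : ℕ} (LS : LinksSystem k) (i : ℕ) : Finset (Sym2 ℕ) :=
  if i = k then {s(1, nn k)}
  else (Finset.Icc 0 (k / 2)).image fun t => s(LS.node i t, LS.node i (t + 1))

/-- The set `L` of all links. -/
def LinksSystem.links {k : ℕ} (LS : LinksSystem k) : Finset (Sym2 ℕ) :=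
  (Finset.Icc 1 k).biUnion LS.P

open scoped Classical in
/-- `deltaL F S` is `δ_F(S)`: the set of links of `F` with exactly one endpoint in `S`. -/
noncomputable def deltaL (F : Finset (Sym2 ℕ)) (S : Finset ℕ) : Finset (Sym2 ℕ) :=
  F.filter fun e => ∃ a b, e = s(a, b) ∧ a ∈ S ∧ b ∉ S

/-- The 0-1 indicator vector `χ^F` of a set `F` of links. -/
noncomputable def chi (F : Finset (Sym2 ℕ)) : Sym2 ℕ → ℝ :=
  fun e => if e ∈ F then 1 else 0


lemma div_eq_iff' (h a j : ℕ) (hh : 0 < h) : a / h = j ↔ (j*h ≤ a ∧ a < (j+1)*h) := by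
  rw [← Nat.le_div_iff_mul_le hh, ← Nat.div_lt_iff_lt_mul hh]
  omega

lemma window_iff {h K i j : ℕ} (hh : 2 ≤ h) (hK : K = 2*h - 1)
    (hi : 1 ≤ i) (hi2 : i ≤ K) (hj : 1 ≤ j) (hj2 : j ≤ K) :
    ((i ≤ j ∧ j ≤ min (i+h-1) K) ∨ (j < i ∧ j ≤ i - h)) ↔
      ∃ s < h, (i - 1 + s) % K + 1 = j := by
  constructor
  · rintro (⟨h1, h2⟩ | ⟨h1, h2⟩)
    · refine ⟨j - i, by omega, ?_⟩
      rw [show i - 1 + (j - i) = j - 1 by omega, Nat.mod_eq_of_lt (by omega)]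
      omega
    · refine ⟨K + j - i, by omega, ?_⟩
      rw [show i - 1 + (K + j - i) = K + (j - 1) by omega, Nat.add_mod_left,
        Nat.mod_eq_of_lt (by omega)]
      omega
  · rintro ⟨s, hs, rfl⟩
    rcases lt_or_ge (i - 1 + s) K with hc | hc
    · rw [Nat.mod_eq_of_lt hc]; omega
    · rw [Nat.mod_eq_sub_mod hc, Nat.mod_eq_of_lt (by omega)]; omega

lemma mem_deltaL_iff {F : Finset (Sym2 ℕ)} {S : Finset ℕ} {v w : ℕ} :
    s(v, w) ∈ deltaL F S ↔ s(v, w) ∈ F ∧ ¬((v ∈ S) ↔ (w ∈ S)) := by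
  classical
  unfold deltaL
  rw [Finset.mem_filter]
  constructor
  · rintro ⟨hF, a, b, heq, ha, hb⟩
    rcases Sym2.eq_iff.mp heq with ⟨rfl, rfl⟩ | ⟨rfl, rfl⟩ <;> exact ⟨hF, by tauto⟩
  · rintro ⟨hF, hxor⟩
    by_cases hv : v ∈ S
    · exact ⟨hF, v, w, rfl, hv, by tauto⟩
    · exact ⟨hF, w, v, Sym2.eq_swap, by tauto, hv⟩

lemma sum_range_eq_sum_Icc (f : ℕ → ℚ) (K : ℕ) :
    ∑ r ∈ Finset.range K, f r = ∑ j ∈ Finset.Icc 1 K, f (j-1) := by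
  induction K with
  | zero => simp
  | succ K ih =>
      rw [Finset.sum_range_succ, ih, Finset.sum_Icc_succ_top (by omega)]
      simp

lemma sum_Ico_eq_sum_Icc_aux (f : ℕ → ℚ) (a d : ℕ) :
    ∑ r ∈ Finset.Ico a (a + d), f r = ∑ i ∈ Finset.Icc 1 d, f (a + i - 1) := by
  induction d with
  | zero => simp
  | succ d ih =>
      rw [show a + (d+1) = (a + d) + 1 from rfl, Finset.sum_Ico_succ_top (Nat.le_add_right a d),
        ih, Finset.sum_Icc_succ_top (Nat.le_add_left 1 d)]
      congr 2

lemma sum_Ico_eq_sum_Icc (f : ℕ → ℚ) (a b : ℕ) (hab : a ≤ b) :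
    ∑ r ∈ Finset.Ico a b, f r = ∑ i ∈ Finset.Icc 1 (b - a), f (a + i - 1) := by
  obtain ⟨d, rfl⟩ := Nat.exists_eq_add_of_le hab
  rw [Nat.add_sub_cancel_left, sum_Ico_eq_sum_Icc_aux]

lemma mod_inj_of_lt {K s s' a : ℕ} (hs : s < K) (hs' : s' < K)
    (he : (a + s) % K = (a + s') % K) : s = s' := by
  rcases Nat.le_total s s' with hle | hle
  · have hd := (Nat.modEq_iff_dvd' (by omega : a + s ≤ a + s')).mp he
    rw [show a + s' - (a + s) = s' - s by omega] at hd
    rcases Nat.eq_zero_or_pos (s' - s) with h0 | hpos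
    · omega
    · have := Nat.le_of_dvd hpos hd; omega
  · have hd := (Nat.modEq_iff_dvd' (by omega : a + s' ≤ a + s)).mp he.symm
    rw [show a + s - (a + s') = s - s' by omega] at hd
    rcases Nat.eq_zero_or_pos (s - s') with h0 | hpos
    · omega
    · have := Nat.le_of_dvd hpos hd; omega
/-- for every links system with links indexed as described, the `m × m`
rational 0-1 matrix `A` — rows `1, …, k-1` indexed by the cuts `δ_L(Q_1), …, δ_L(Q_{k-1})`,
rows `k, …, m` indexed by the cuts `δ_L(N_1), …, δ_L(N_{n-1})`, columns indexed by the
links `ℓ_1, …, ℓ_m`, with `(r,c)` entry `1` iff link `ℓ_c` lies in the cut indexing row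
`r` — is nonsingular: `det A ≠ 0` and `A` has rank `m`. -/
theorem statement12 (k : ℕ) (hk : 4 ≤ k) (hke : Even k) (LS : LinksSystem k)
    (ℓ : ℕ → Sym2 ℕ)
    (hℓ1 : ∀ i ∈ Finset.Icc 1 k, ℓ i ∈ LS.P i ∧ ∃ b, ℓ i = s(1, b))
    (hℓ2 : ∀ v ∈ Finset.Icc 2 (nn k - 1),
        ℓ (k + v - 1) ∈ LS.links ∧ ∃ b, v < b ∧ ℓ (k + v - 1) = s(v, b))
    (A : Matrix (Fin (mm k)) (Fin (mm k)) ℚ)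
    (hA : ∀ r c : Fin (mm k), A r c =
        if ℓ ((c : ℕ) + 1) ∈
            (if (r : ℕ) < k - 1 then deltaL LS.links (Qset k ((r : ℕ) + 1))
             else deltaL LS.links (Nset ((r : ℕ) - (k - 1) + 1)))
        then 1 else 0) :
    A.det ≠ 0 ∧ A.rank = mm k := by
  classical
  have key : ∀ yv : Fin (mm k) → ℚ, Matrix.vecMul yv A = 0 → yv = 0 := by
    intro y hy
    obtain ⟨h, hk2⟩ := hke
    have hh : 2 ≤ h := by omega
    have hhalf : k / 2 = h := by omega
    have e0 : k - 1 = 2 * h - 1 := by omega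
    have e1 : k * (k - 1) = 2 * (h * (2 * h - 1)) := by
      rw [e0, hk2]
      generalize (2 * h - 1) = g
      ring
    have hnn : nn k = 2 + h * (2 * h - 1) := by
      unfold nn
      rw [e1, Nat.mul_div_cancel_left _ two_pos]
    have hmm' : mm k = h * (2 * h - 1) + k := by
      unfold mm
      rw [e1, Nat.mul_div_cancel_left _ two_pos]
    obtain ⟨nK, hnK⟩ : ∃ x, h * (2 * h - 1) = x := ⟨_, rfl⟩
    rw [hnK] at hnn hmm'
    have hnKge : 3 * h ≤ nK := by
      calc 3 * h ≤ (2 * h - 1) * h := Nat.mul_le_mul_right h (by omega)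
        _ = nK := by rw [mul_comm]; exact hnK
    have hKm : k - 1 ≤ mm k := by omega
    have hmN : mm k - (k - 1) = nn k - 1 := by omega
    -- local definitions
    set w : ℕ → ℚ := fun x => if hx : x < mm k then y ⟨x, hx⟩ else 0 with hwdef
    set q : ℕ → ℚ := fun j => w (j - 1) with hqdef
    set p : ℕ → ℚ := fun i => w (k - 1 + i - 1) with hpdef
    set Pp : ℕ → ℚ := fun x => ∑ i ∈ Finset.Icc 1 x, p i with hPpdef
    set E : Sym2 ℕ → ℚ := fun e => ∑ r ∈ Finset.range (mm k), w r *
      (if e ∈ (if r < k - 1 then deltaL LS.links (Qset k (r+1))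
          else deltaL LS.links (Nset (r - (k-1) + 1))) then (1:ℚ) else 0) with hEdef
    -- every column gives a vanishing E-value
    have hE : ∀ c : Fin (mm k), E (ℓ ((c:ℕ)+1)) = 0 := by
      intro c
      have h0 := congrFun hy c
      simp only [Matrix.vecMul, dotProduct, Pi.zero_apply] at h0
      simp only [hEdef]
      rw [← Fin.sum_univ_eq_sum_range (fun r => w r *
        (if (ℓ ((c:ℕ)+1)) ∈ (if r < k - 1 then deltaL LS.links (Qset k (r+1))
          else deltaL LS.links (Nset (r - (k-1) + 1))) then (1:ℚ) else 0)) (mm k)]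
      refine Eq.trans ?_ h0
      apply Finset.sum_congr rfl
      intro r _
      rw [hA]
      congr 1
      simp only [hwdef]
      rw [dif_pos r.isLt]
    -- evaluation of E on a link
    have hEval : ∀ v u : ℕ, 1 ≤ v → v < u → u ≤ nn k → s(v,u) ∈ LS.links →
        E (s(v,u)) = (∑ j ∈ Finset.Icc 1 (k-1),
            if ((v ∈ Qset k j) ↔ (u ∈ Qset k j)) then 0 else q j)
          + (Pp (u-1) - Pp (v-1)) := by
      intro v u hv hvu hun hmem
      simp only [hEdef]
      rw [Finset.range_eq_Ico, ← Finset.sum_Ico_consecutive _ (Nat.zero_le (k-1)) hKm]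
      have part1 : ∑ r ∈ Finset.Ico 0 (k-1), (w r *
          (if s(v,u) ∈ (if r < k - 1 then deltaL LS.links (Qset k (r+1))
            else deltaL LS.links (Nset (r - (k-1) + 1))) then (1:ℚ) else 0))
          = ∑ j ∈ Finset.Icc 1 (k-1),
            (if ((v ∈ Qset k j) ↔ (u ∈ Qset k j)) then 0 else q j) := by
        rw [← Finset.range_eq_Ico, sum_range_eq_sum_Icc]
        apply Finset.sum_congr rfl
        intro j hj
        rw [Finset.mem_Icc] at hj
        rw [if_pos (by omega : j - 1 < k - 1), show j - 1 + 1 = j by omega]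
        by_cases hc : (v ∈ Qset k j) ↔ (u ∈ Qset k j)
        · rw [if_pos hc, if_neg (fun hm => (mem_deltaL_iff.mp hm).2 hc), mul_zero]
        · rw [if_neg hc, if_pos (mem_deltaL_iff.mpr ⟨hmem, hc⟩), mul_one]
      have part2 : ∑ r ∈ Finset.Ico (k-1) (mm k), (w r *
          (if s(v,u) ∈ (if r < k - 1 then deltaL LS.links (Qset k (r+1))
            else deltaL LS.links (Nset (r - (k-1) + 1))) then (1:ℚ) else 0))
          = Pp (u-1) - Pp (v-1) := by
        rw [sum_Ico_eq_sum_Icc _ _ _ hKm, hmN]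
        have step : ∀ i ∈ Finset.Icc 1 (nn k - 1), (w (k - 1 + i - 1) *
            (if s(v,u) ∈ (if (k - 1 + i - 1) < k - 1 then deltaL LS.links (Qset k ((k-1+i-1)+1))
              else deltaL LS.links (Nset ((k-1+i-1) - (k-1) + 1))) then (1:ℚ) else 0))
            = (if (v ≤ i ∧ i < u) then p i else 0) := by
          intro i hi
          rw [Finset.mem_Icc] at hi
          rw [if_neg (by omega : ¬ (k - 1 + i - 1 < k - 1)),
            show (k-1+i-1) - (k-1) + 1 = i by omega]
          have hmemN : ¬((v ∈ Nset i) ↔ (u ∈ Nset i)) ↔ (v ≤ i ∧ i < u) := by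
            unfold Nset
            simp only [Finset.mem_Icc]
            omega
          by_cases hc : v ≤ i ∧ i < u
          · rw [if_pos hc, if_pos (mem_deltaL_iff.mpr ⟨hmem, hmemN.mpr hc⟩), mul_one]
          · rw [if_neg hc, if_neg (fun hm => (hmemN.mp (mem_deltaL_iff.mp hm).2) |> hc), mul_zero]
        rw [Finset.sum_congr rfl step]
        rw [← Finset.sum_filter]
        have hfilter : (Finset.Icc 1 (nn k - 1)).filter (fun i => v ≤ i ∧ i < u)
            = Finset.Icc v (u-1) := by
          ext x
          simp only [Finset.mem_filter, Finset.mem_Icc]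
          omega
        rw [hfilter]
        simp only [hPpdef]
        have h1 : Finset.Icc v (u-1) = Finset.Ico v u := by
          rw [← Finset.Ico_add_one_right_eq_Icc]
          congr 1
          omega
        have h2 : Finset.Icc 1 (u-1) = Finset.Ico 1 u := by
          rw [← Finset.Ico_add_one_right_eq_Icc]; congr 1; omega
        have h3 : Finset.Icc 1 (v-1) = Finset.Ico 1 v := by
          rw [← Finset.Ico_add_one_right_eq_Icc]; congr 1; omega
        rw [h1, h2, h3, ← Finset.sum_Ico_consecutive _ (by omega : 1 ≤ v) (by omega : v ≤ u)]
        ring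
      rw [part1, part2]
    -- a second form of hE, indexed by naturals
    have hE' : ∀ cv : ℕ, ∀ hc : cv < mm k, E (ℓ (cv + 1)) = 0 := fun cv hc => hE ⟨cv, hc⟩
    -- Q-set basics
    set qidx : ℕ → ℕ := fun vv => (vv - 2)/h + 1 with hqidxdef
    have hQmem : ∀ vv j, 2 ≤ vv → 1 ≤ j → (vv ∈ Qset k j ↔ (vv - 2)/h = j - 1) := by
      intro vv j h2 h1
      obtain ⟨j', rfl⟩ : ∃ j', j = j' + 1 := ⟨j - 1, by omega⟩
      unfold Qset
      have hd := div_eq_iff' h (vv - 2) j' (by omega)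
      have hY : (j' + 1) * h = j' * h + h := by ring
      rw [Finset.mem_Icc, hhalf]
      simp only [Nat.add_sub_cancel]
      rw [hd, hY]
      generalize j' * h = X
      omega
    have hQrange : ∀ vv, 2 ≤ vv → vv ≤ nn k - 1 → (vv - 2)/h < k - 1 := by
      intro vv h2 h3
      have hlt : vv - 2 < (k-1) * h := by
        rw [e0, mul_comm, hnK]
        omega
      exact (Nat.div_lt_iff_lt_mul (by omega)).mpr hlt
    have hQnot1 : ∀ j, (1:ℕ) ∉ Qset k j := by
      intro j
      unfold Qset
      rw [Finset.mem_Icc]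
      omega
    have hQnotn : ∀ j, j ≤ k - 1 → nn k ∉ Qset k j := by
      intro j hj
      unfold Qset
      rw [Finset.mem_Icc, hhalf]
      rintro ⟨h1, h2⟩
      have hle : j * h ≤ (k-1) * h := Nat.mul_le_mul_right h hj
      have hkh : (k-1) * h = nK := by rw [e0, mul_comm]; exact hnK
      rw [hkh] at hle
      have hfin : nn k ≤ 1 + nK := le_trans h2 (Nat.add_le_add_left hle 1)
      omega
    -- path facts
    have hmono : ∀ i ∈ Finset.Icc 1 (k-1), ∀ t t', t < t' → t' ≤ h + 1 →
        LS.node i t < LS.node i t' := by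
      intro i hi t t' htt' ht'
      have base := LS.node_mono i hi
      rw [hhalf] at base
      induction t' with
      | zero => omega
      | succ t'' ih =>
          rcases Nat.lt_or_ge t t'' with hc | hc
          · exact lt_trans (ih hc (by omega)) (base t'' (by omega))
          · have he : t = t'' := by omega
            subst he
            exact base t (by omega)
    have hfirst : ∀ i ∈ Finset.Icc 1 (k-1), LS.node i 0 = 1 := LS.node_first
    have hlastn : ∀ i ∈ Finset.Icc 1 (k-1), LS.node i (h+1) = nn k := by
      intro i hi
      have := LS.node_last i hi
      rwa [hhalf] at this
    have hrange : ∀ i ∈ Finset.Icc 1 (k-1), ∀ t, 1 ≤ t → t ≤ h →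
        2 ≤ LS.node i t ∧ LS.node i t ≤ nn k - 1 := by
      intro i hi t h1 h2
      have l1 := hmono i hi 0 t (by omega) (by omega)
      have l2 := hmono i hi t (h+1) (by omega) (by omega)
      rw [hfirst i hi] at l1
      rw [hlastn i hi] at l2
      omega
    -- decomposition of links
    have hdecomp : ∀ a b : ℕ, a < b → s(a,b) ∈ LS.links →
        (a = 1 ∧ b = nn k) ∨ (∃ i' ∈ Finset.Icc 1 (k-1), ∃ t' ≤ h,
          a = LS.node i' t' ∧ b = LS.node i' (t'+1)) := by
      intro a b hab hmem
      unfold LinksSystem.links at hmem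
      rw [Finset.mem_biUnion] at hmem
      obtain ⟨i', hi', hP⟩ := hmem
      rw [Finset.mem_Icc] at hi'
      unfold LinksSystem.P at hP
      by_cases hik : i' = k
      · rw [if_pos hik, Finset.mem_singleton] at hP
        rcases Sym2.eq_iff.mp hP.symm with ⟨h1, h2⟩ | ⟨h1, h2⟩
        · left; exact ⟨h1.symm, h2.symm⟩
        · exfalso; omega
      · rw [if_neg hik, Finset.mem_image] at hP
        obtain ⟨t', ht', heq⟩ := hP
        rw [Finset.mem_Icc, hhalf] at ht'
        have hi'' : i' ∈ Finset.Icc 1 (k-1) := Finset.mem_Icc.mpr (by omega)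
        have hmono' : LS.node i' t' < LS.node i' (t'+1) :=
          hmono i' hi'' t' (t'+1) (by omega) (by omega)
        rcases Sym2.eq_iff.mp heq with ⟨h1, h2⟩ | ⟨h1, h2⟩
        · right; exact ⟨i', hi'', t', ht'.2, h1.symm, h2.symm⟩
        · exfalso; omega
    -- cover, restated
    have hcover : ∀ vv, 2 ≤ vv → vv ≤ nn k - 1 →
        ∃ i, (i ∈ Finset.Icc 1 (k-1)) ∧ ∃ t, 1 ≤ t ∧ t ≤ h ∧ LS.node i t = vv := by
      intro vv h1 h2
      obtain ⟨i, ⟨hi, t, ht, hnode⟩, _⟩ := LS.cover vv (Finset.mem_Icc.mpr ⟨h1, h2⟩)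
      rw [Finset.mem_Icc, hhalf] at ht
      exact ⟨i, hi, t, ht.1, ht.2, hnode⟩
    have hcover_uniq : ∀ vv, 2 ≤ vv → vv ≤ nn k - 1 → ∀ i ∈ Finset.Icc 1 (k-1), ∀ t, 1 ≤ t → t ≤ h →
        LS.node i t = vv → ∀ i' ∈ Finset.Icc 1 (k-1), ∀ t', 1 ≤ t' → t' ≤ h →
        LS.node i' t' = vv → i = i' ∧ t = t' := by
      intro vv h1 h2 i hi t ht1 ht2 hn i' hi' t' ht1' ht2' hn'
      obtain ⟨i0, _, huniq⟩ := LS.cover vv (Finset.mem_Icc.mpr ⟨h1, h2⟩)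
      have e1 : i = i0 := huniq i ⟨hi, t, Finset.mem_Icc.mpr ⟨ht1, by omega⟩, hn⟩
      have e2 : i' = i0 := huniq i' ⟨hi', t', Finset.mem_Icc.mpr ⟨ht1', by omega⟩, hn'⟩
      have hii : i = i' := by rw [e1, e2]
      subst hii
      refine ⟨rfl, ?_⟩
      rcases lt_trichotomy t t' with hc | hc | hc
      · have := hmono i hi t t' hc (by omega); omega
      · exact hc
      · have := hmono i hi t' t hc (by omega); omega
    -- identification of the links ℓ_c
    have hstart : ∀ i, 1 ≤ i → i ≤ k - 1 → ℓ i = s(LS.node i 0, LS.node i 1) := by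
      intro i h1 h2
      obtain ⟨hP, b, hb⟩ := hℓ1 i (Finset.mem_Icc.mpr ⟨h1, by omega⟩)
      unfold LinksSystem.P at hP
      rw [if_neg (by omega : ¬ i = k), Finset.mem_image] at hP
      obtain ⟨t, ht, heq⟩ := hP
      rw [Finset.mem_Icc, hhalf] at ht
      have hi : i ∈ Finset.Icc 1 (k-1) := Finset.mem_Icc.mpr ⟨h1, h2⟩
      rw [hb] at heq
      rcases Sym2.eq_iff.mp heq with ⟨h3, h4⟩ | ⟨h3, h4⟩
      · have ht0 : t = 0 := by
          by_contra hne
          have := hmono i hi 0 t (by omega) (by omega)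
          rw [hfirst i hi] at this
          omega
        subst ht0
        rw [hb, h3, h4]
      · exfalso
        have := hmono i hi 0 (t+1) (by omega) (by omega)
        rw [hfirst i hi] at this
        omega
    have hstep : ∀ i ∈ Finset.Icc 1 (k-1), ∀ t, 1 ≤ t → t ≤ h →
        ℓ (k + LS.node i t - 1) = s(LS.node i t, LS.node i (t+1)) := by
      intro i hi t ht1 ht2
      have hr := hrange i hi t ht1 ht2
      obtain ⟨hmem, b, hvb, hb⟩ := hℓ2 (LS.node i t) (Finset.mem_Icc.mpr ⟨hr.1, hr.2⟩)
      rw [hb] at hmem ⊢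
      rcases hdecomp _ _ hvb hmem with ⟨h1, _⟩ | ⟨i', hi', t', ht', h1, h2⟩
      · omega
      · have ht'1 : 1 ≤ t' := by
          by_contra hne
          have ht'0 : t' = 0 := by omega
          rw [ht'0, hfirst i' hi'] at h1
          omega
        obtain ⟨e1, e2⟩ := hcover_uniq (LS.node i t) hr.1 hr.2 i hi t ht1 ht2 rfl
          i' hi' t' ht'1 ht' h1.symm
        rw [h2, ← e1, ← e2]
    have hlk : ℓ k = s(1, nn k) := by
      obtain ⟨hP, _⟩ := hℓ1 k (Finset.mem_Icc.mpr ⟨by omega, le_refl k⟩)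
      unfold LinksSystem.P at hP
      rw [if_pos rfl, Finset.mem_singleton] at hP
      exact hP
    -- edges are links
    have hedgemem : ∀ i ∈ Finset.Icc 1 (k-1), ∀ t, t ≤ h →
        s(LS.node i t, LS.node i (t+1)) ∈ LS.links := by
      intro i hi t ht
      unfold LinksSystem.links
      rw [Finset.mem_biUnion]
      rw [Finset.mem_Icc] at hi
      refine ⟨i, Finset.mem_Icc.mpr (by omega), ?_⟩
      unfold LinksSystem.P
      rw [if_neg (by omega), Finset.mem_image]
      exact ⟨t, Finset.mem_Icc.mpr ⟨Nat.zero_le t, by omega⟩, rfl⟩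
    have hstn_mem : s(1, nn k) ∈ LS.links := by
      unfold LinksSystem.links
      rw [Finset.mem_biUnion]
      refine ⟨k, Finset.mem_Icc.mpr ⟨by omega, le_refl k⟩, ?_⟩
      unfold LinksSystem.P
      rw [if_pos rfl, Finset.mem_singleton]
    -- vanishing of E on path edges
    have hEdge : ∀ i ∈ Finset.Icc 1 (k-1), ∀ t, t ≤ h →
        E (s(LS.node i t, LS.node i (t+1))) = 0 := by
      intro i hi t ht
      have hi' := Finset.mem_Icc.mp hi
      rcases Nat.eq_zero_or_pos t with rfl | htpos
      · have hc : i - 1 < mm k := by omega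
        have hv := hE' (i - 1) hc
        rw [show i - 1 + 1 = i by omega] at hv
        rw [← hstart i hi'.1 hi'.2]
        exact hv
      · have hr := hrange i hi t htpos ht
        have hc : k + LS.node i t - 2 < mm k := by omega
        have hv := hE' (k + LS.node i t - 2) hc
        rw [show (k + LS.node i t - 2) + 1 = k + LS.node i t - 1 by omega] at hv
        rw [← hstep i hi t htpos ht]
        exact hv
    have hEstn : E (s(1, nn k)) = 0 := by
      have hc : k - 1 < mm k := by omega
      have hv := hE' (k - 1) hc
      rw [show k - 1 + 1 = k by omega, hlk] at hv
      exact hv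
    -- qidx basics
    have hqidx_ge : ∀ vv : ℕ, 1 ≤ qidx vv := by
      intro vv; simp only [hqidxdef]; exact Nat.le_add_left 1 _
    have hqidx_le : ∀ vv, 2 ≤ vv → vv ≤ nn k - 1 → qidx vv ≤ k - 1 := by
      intro vv h1 h2
      have := hQrange vv h1 h2
      simp only [hqidxdef]
      exact Nat.succ_le_of_lt this
    have hmem_qidx : ∀ vv j, 2 ≤ vv → 1 ≤ j → (vv ∈ Qset k j ↔ j = qidx vv) := by
      intro vv j h1 hj
      rw [hQmem vv j h1 hj]
      simp only [hqidxdef]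
      generalize (vv - 2) / h = d
      omega
    -- evaluations of the Q-part of the edge equations
    have hQP1 : ∀ u', 2 ≤ u' → u' ≤ nn k - 1 →
        (∑ j ∈ Finset.Icc 1 (k-1), if (((1:ℕ) ∈ Qset k j) ↔ (u' ∈ Qset k j)) then 0 else q j)
          = q (qidx u') := by
      intro u' h1 h2
      have hc : ∀ j ∈ Finset.Icc 1 (k-1),
          (if (((1:ℕ) ∈ Qset k j) ↔ (u' ∈ Qset k j)) then 0 else q j)
            = if j = qidx u' then q j else 0 := by
        intro j hj
        rw [Finset.mem_Icc] at hj
        have hn1 := hQnot1 j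
        have hm := hmem_qidx u' j h1 hj.1
        by_cases hcc : j = qidx u'
        · rw [if_pos hcc, if_neg (fun hiff => hn1 (hiff.mpr (hm.mpr hcc)))]
        · rw [if_neg hcc, if_pos (iff_of_false hn1 (fun hin => hcc (hm.mp hin)))]
      rw [Finset.sum_congr rfl hc, Finset.sum_ite_eq' _ (qidx u') q,
        if_pos (Finset.mem_Icc.mpr ⟨hqidx_ge u', hqidx_le u' h1 h2⟩)]
    have hQP2 : ∀ v', 2 ≤ v' → v' ≤ nn k - 1 →
        (∑ j ∈ Finset.Icc 1 (k-1), if ((v' ∈ Qset k j) ↔ (nn k ∈ Qset k j)) then 0 else q j)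
          = q (qidx v') := by
      intro v' h1 h2
      have hc : ∀ j ∈ Finset.Icc 1 (k-1),
          (if ((v' ∈ Qset k j) ↔ (nn k ∈ Qset k j)) then 0 else q j)
            = if j = qidx v' then q j else 0 := by
        intro j hj
        rw [Finset.mem_Icc] at hj
        have hn1 := hQnotn j hj.2
        have hm := hmem_qidx v' j h1 hj.1
        by_cases hcc : j = qidx v'
        · rw [if_pos hcc, if_neg (fun hiff => hn1 (hiff.mp (hm.mpr hcc)))]
        · rw [if_neg hcc, if_pos (iff_of_false (fun hin => hcc (hm.mp hin)) hn1)]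
      rw [Finset.sum_congr rfl hc, Finset.sum_ite_eq' _ (qidx v') q,
        if_pos (Finset.mem_Icc.mpr ⟨hqidx_ge v', hqidx_le v' h1 h2⟩)]
    have hQP3 : ∀ v' u', 2 ≤ v' → v' ≤ nn k - 1 → 2 ≤ u' → u' ≤ nn k - 1 → qidx v' ≠ qidx u' →
        (∑ j ∈ Finset.Icc 1 (k-1), if ((v' ∈ Qset k j) ↔ (u' ∈ Qset k j)) then 0 else q j)
          = q (qidx v') + q (qidx u') := by
      intro v' u' hv1 hv2 hu1 hu2 hne
      have hc : ∀ j ∈ Finset.Icc 1 (k-1),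
          (if ((v' ∈ Qset k j) ↔ (u' ∈ Qset k j)) then 0 else q j)
            = (if j = qidx v' then q j else 0) + (if j = qidx u' then q j else 0) := by
        intro j hj
        rw [Finset.mem_Icc] at hj
        have hmv := hmem_qidx v' j hv1 hj.1
        have hmu := hmem_qidx u' j hu1 hj.1
        by_cases hcv : j = qidx v'
        · have hnu : ¬ (j = qidx u') := by rw [hcv]; exact hne
          rw [if_pos hcv, if_neg hnu, add_zero,
            if_neg (fun hiff => hnu (hmu.mp (hiff.mp (hmv.mpr hcv))))]
        · by_cases hcu : j = qidx u'
          · rw [if_neg hcv, if_pos hcu, zero_add,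
              if_neg (fun hiff => hcv (hmv.mp (hiff.mpr (hmu.mpr hcu))))]
          · rw [if_neg hcv, if_neg hcu, add_zero,
              if_pos (iff_of_false (fun hin => hcv (hmv.mp hin)) (fun hin => hcu (hmu.mp hin)))]
      rw [Finset.sum_congr rfl hc, Finset.sum_add_distrib,
        Finset.sum_ite_eq' _ (qidx v') q, Finset.sum_ite_eq' _ (qidx u') q,
        if_pos (Finset.mem_Icc.mpr ⟨hqidx_ge v', hqidx_le v' hv1 hv2⟩),
        if_pos (Finset.mem_Icc.mpr ⟨hqidx_ge u', hqidx_le u' hu1 hu2⟩)]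
    have hQP4 : (∑ j ∈ Finset.Icc 1 (k-1),
        if (((1:ℕ) ∈ Qset k j) ↔ (nn k ∈ Qset k j)) then 0 else q j) = 0 := by
      apply Finset.sum_eq_zero
      intro j hj
      rw [Finset.mem_Icc] at hj
      rw [if_pos (iff_of_false (hQnot1 j) (hQnotn j hj.2))]
    -- Pp basics
    have hPp0 : Pp 0 = 0 := by simp [hPpdef]
    have hPn : Pp (nn k - 1) = 0 := by
      have he := hEstn
      rw [hEval 1 (nn k) (le_refl 1) (by omega) (le_refl _) hstn_mem, hQP4,
        Nat.sub_self, hPp0] at he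
      linarith
    -- the general edge equation
    have hedgeEq : ∀ i ∈ Finset.Icc 1 (k-1), ∀ t, t ≤ h →
        (∑ j ∈ Finset.Icc 1 (k-1),
          if ((LS.node i t ∈ Qset k j) ↔ (LS.node i (t+1) ∈ Qset k j)) then 0 else q j)
          + (Pp (LS.node i (t+1) - 1) - Pp (LS.node i t - 1)) = 0 := by
      intro i hi t ht
      have hv1 : 1 ≤ LS.node i t := by
        rcases Nat.eq_zero_or_pos t with rfl | htpos
        · rw [hfirst i hi]
        · exact le_trans (by omega) (hrange i hi t htpos ht).1
      have hv2 : LS.node i t < LS.node i (t+1) := hmono i hi t (t+1) (by omega) (by omega)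
      have hv3 : LS.node i (t+1) ≤ nn k := by
        rcases Nat.lt_or_ge (t+1) (h+1) with hcc | hcc
        · have := (hrange i hi (t+1) (by omega) (by omega)).2; omega
        · have he : t + 1 = h + 1 := by omega
          rw [he, hlastn i hi]
      have heval := hEval _ _ hv1 hv2 hv3 (hedgemem i hi t ht)
      rw [← heval]
      exact hEdge i hi t ht
    -- window injectivity and image identification
    have hwin_inj : ∀ a : ℕ, Set.InjOn (fun s => (a + s) % (k-1) + 1) ↑(Finset.range h) := by
      intro a s hs s' hs' he
      simp only [Finset.coe_range, Set.mem_Iio] at hs hs'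
      have he' : (a + s) % (k-1) = (a + s') % (k-1) := Nat.add_right_cancel he
      exact mod_inj_of_lt (by omega) (by omega) he'
    have himage : ∀ i, 1 ≤ i → i ≤ k - 1 →
        (Finset.Icc 1 h).image (fun t => qidx (LS.node i t)) =
        (Finset.range h).image (fun s => (i - 1 + s) % (k-1) + 1) := by
      intro i h1 h2
      have hi : i ∈ Finset.Icc 1 (k-1) := Finset.mem_Icc.mpr ⟨h1, h2⟩
      have hmq := LS.meetsQ i hi
      ext j
      simp only [Finset.mem_image, Finset.mem_Icc, Finset.mem_range]
      constructor
      · rintro ⟨t, ⟨ht1, ht2⟩, rfl⟩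
        have hr := hrange i hi t ht1 ht2
        have hjr : 1 ≤ qidx (LS.node i t) ∧ qidx (LS.node i t) ≤ k - 1 :=
          ⟨hqidx_ge _, hqidx_le _ hr.1 hr.2⟩
        have hmq1 := hmq (qidx (LS.node i t)) (Finset.mem_Icc.mpr hjr)
        rw [hhalf] at hmq1
        have hex : ∃ t' ∈ Finset.Icc 1 h, LS.node i t' ∈ Qset k (qidx (LS.node i t)) :=
          ⟨t, Finset.mem_Icc.mpr ⟨ht1, ht2⟩,
            (hmem_qidx _ _ hr.1 (hqidx_ge _)).mpr rfl⟩
        have hcond := hmq1.mp hex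
        obtain ⟨s, hs, hjs⟩ := (window_iff hh e0 h1 h2 hjr.1 hjr.2).mp hcond
        exact ⟨s, hs, hjs⟩
      · rintro ⟨s, hs, rfl⟩
        have hjr : 1 ≤ (i - 1 + s) % (k-1) + 1 ∧ (i - 1 + s) % (k-1) + 1 ≤ k - 1 := by
          have := Nat.mod_lt (i-1+s) (show 0 < k-1 by omega)
          exact ⟨Nat.le_add_left 1 _, Nat.succ_le_of_lt this⟩
        have hw := (window_iff hh e0 h1 h2 hjr.1 hjr.2).mpr ⟨s, hs, rfl⟩
        have hmq1 := hmq ((i - 1 + s) % (k-1) + 1) (Finset.mem_Icc.mpr hjr)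
        rw [hhalf] at hmq1
        obtain ⟨t, ht, hQ⟩ := hmq1.mpr hw
        rw [Finset.mem_Icc] at ht
        refine ⟨t, ⟨ht.1, ht.2⟩, ?_⟩
        have hr := hrange i hi t ht.1 ht.2
        exact ((hmem_qidx _ _ hr.1 hjr.1).mp hQ).symm
    have hinjQ : ∀ i, 1 ≤ i → i ≤ k-1 →
        Set.InjOn (fun t => qidx (LS.node i t)) ↑(Finset.Icc 1 h) := by
      intro i h1 h2
      apply Finset.card_image_iff.mp
      rw [himage i h1 h2, Finset.card_image_of_injOn (hwin_inj (i-1)),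
        Finset.card_range, Nat.card_Icc]
      omega
    have hsum_eq : ∀ i, 1 ≤ i → i ≤ k-1 →
        ∑ t ∈ Finset.Icc 1 h, q (qidx (LS.node i t))
          = ∑ s ∈ Finset.range h, q ((i - 1 + s) % (k-1) + 1) := by
      intro i h1 h2
      have e1 : ∑ j ∈ (Finset.Icc 1 h).image (fun t => qidx (LS.node i t)), q j
          = ∑ t ∈ Finset.Icc 1 h, q (qidx (LS.node i t)) :=
        Finset.sum_image
          (fun x hx y hy he => hinjQ i h1 h2 (Finset.mem_coe.mpr hx) (Finset.mem_coe.mpr hy) he)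
      have e2 : ∑ j ∈ (Finset.range h).image (fun s => (i - 1 + s) % (k-1) + 1), q j
          = ∑ s ∈ Finset.range h, q ((i - 1 + s) % (k-1) + 1) :=
        Finset.sum_image
          (fun x hx y hy he => hwin_inj (i-1) (Finset.mem_coe.mpr hx) (Finset.mem_coe.mpr hy) he)
      rw [← e1, ← e2, himage i h1 h2]
    -- the per-path sums of q over a cyclic window vanish
    have hpath : ∀ i, 1 ≤ i → i ≤ k - 1 →
        ∑ s ∈ Finset.range h, q ((i - 1 + s) % (k-1) + 1) = 0 := by
      intro i h1 h2
      have hi : i ∈ Finset.Icc 1 (k-1) := Finset.mem_Icc.mpr ⟨h1, h2⟩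
      have hu0 : LS.node i 0 = 1 := hfirst i hi
      have hun : LS.node i (h+1) = nn k := hlastn i hi
      set SQ : ℕ → ℚ := fun t => (∑ j ∈ Finset.Icc 1 (k-1),
        if ((LS.node i t ∈ Qset k j) ↔ (LS.node i (t+1) ∈ Qset k j)) then 0 else q j)
        with hSQdef
      set G : ℕ → ℚ := fun t => q (qidx (LS.node i (t+1))) with hGdef
      -- sum of all edge equations
      have hsum0 : ∑ t ∈ Finset.range (h+1),
          (SQ t + (Pp (LS.node i (t+1) - 1) - Pp (LS.node i t - 1))) = 0 := by
        apply Finset.sum_eq_zero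
        intro t ht
        rw [Finset.mem_range] at ht
        exact hedgeEq i hi t (by omega)
      rw [Finset.sum_add_distrib,
        Finset.sum_range_sub (fun t => Pp (LS.node i t - 1)), hun, hu0, hPn,
        Nat.sub_self, hPp0] at hsum0
      -- evaluate the boundary and middle terms
      have hSQ0 : SQ 0 = G 0 := by
        simp only [hSQdef, hGdef, hu0]
        exact hQP1 _ (hrange i hi 1 le_rfl (by omega)).1 (hrange i hi 1 le_rfl (by omega)).2
      have hSQh : SQ h = G (h-1) := by
        simp only [hSQdef, hGdef, hun]
        rw [show h - 1 + 1 = h by omega]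
        exact hQP2 _ (hrange i hi h (by omega) le_rfl).1 (hrange i hi h (by omega) le_rfl).2
      have hSQmid : ∀ t, t ≤ h - 2 → SQ (t+1) = G t + G (t+1) := by
        intro t ht
        simp only [hSQdef, hGdef]
        have hr1 := hrange i hi (t+1) (by omega) (by omega)
        have hr2 := hrange i hi (t+1+1) (by omega) (by omega)
        have hne : qidx (LS.node i (t+1)) ≠ qidx (LS.node i (t+1+1)) := by
          intro hee
          have := hinjQ i h1 h2
            (Finset.mem_coe.mpr (Finset.mem_Icc.mpr ⟨by omega, by omega⟩))
            (Finset.mem_coe.mpr (Finset.mem_Icc.mpr ⟨by omega, by omega⟩)) hee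
          omega
        exact hQP3 _ _ hr1.1 hr1.2 hr2.1 hr2.2 hne
      -- assemble: the SQ-sum is twice the G-sum
      have hb1 : ∑ t ∈ Finset.range (h+1), SQ t
          = (∑ t ∈ Finset.range h, SQ (t+1)) + SQ 0 := Finset.sum_range_succ' SQ h
      have hb2 : ∑ t ∈ Finset.range h, SQ (t+1)
          = (∑ t ∈ Finset.range (h-1), SQ (t+1)) + SQ h := by
        have hs := Finset.sum_range_succ (fun t => SQ (t+1)) (h-1)
        rw [show h - 1 + 1 = h by omega] at hs
        exact hs
      have hb3 : ∑ t ∈ Finset.range (h-1), SQ (t+1)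
          = (∑ t ∈ Finset.range (h-1), G t) + (∑ t ∈ Finset.range (h-1), G (t+1)) := by
        rw [← Finset.sum_add_distrib]
        apply Finset.sum_congr rfl
        intro t ht
        rw [Finset.mem_range] at ht
        exact hSQmid t (by omega)
      have hb4 : ∑ t ∈ Finset.range h, G t
          = (∑ t ∈ Finset.range (h-1), G t) + G (h-1) := by
        have hs := Finset.sum_range_succ G (h-1)
        rw [show h - 1 + 1 = h by omega] at hs
        exact hs
      have hb5 : ∑ t ∈ Finset.range h, G t
          = (∑ t ∈ Finset.range (h-1), G (t+1)) + G 0 := by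
        have hs := Finset.sum_range_succ' G (h-1)
        rw [show h - 1 + 1 = h by omega] at hs
        exact hs
      have hGsum : ∑ t ∈ Finset.range h, G t = 0 := by
        rw [hb1, hb2, hb3, hSQ0, hSQh] at hsum0
        linarith
      -- transfer to the cyclic-window sum
      have hIccsum : ∑ t ∈ Finset.Icc 1 h, q (qidx (LS.node i t))
          = ∑ t ∈ Finset.range h, G t := by
        rw [show (∑ t ∈ Finset.range h, G t)
            = ∑ t ∈ Finset.range h, q (qidx (LS.node i (t+1))) from rfl,
          sum_range_eq_sum_Icc (fun r => q (qidx (LS.node i (r+1)))) h]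
        apply Finset.sum_congr rfl
        intro j hj
        rw [Finset.mem_Icc] at hj
        rw [show j - 1 + 1 = j by omega]
      rw [← hsum_eq i h1 h2, hIccsum]
      exact hGsum
    -- the circulant system forces q = 0
    have hT : ∀ a : ℕ, ∑ s ∈ Finset.range h, q ((a + s) % (k-1) + 1) = 0 := by
      intro a
      have hmlt := Nat.mod_lt a (show 0 < k-1 by omega)
      have hp := hpath (a % (k-1) + 1) (Nat.le_add_left 1 _) (Nat.succ_le_of_lt hmlt)
      rw [← hp]
      apply Finset.sum_congr rfl
      intro s _
      have hmq : (a + s) % (k-1) = (a % (k-1) + 1 - 1 + s) % (k-1) := by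
        rw [Nat.add_sub_cancel]
        exact (Nat.ModEq.add_right s (Nat.mod_modEq a (k-1))).symm
      rw [hmq]
    have hshift : ∀ a : ℕ, q ((a + h) % (k-1) + 1) = q (a % (k-1) + 1) := by
      intro a
      have t1 := hT a
      have t2 := hT (a + 1)
      have t1' : (∑ s ∈ Finset.range (h-1), q ((a + (s+1)) % (k-1) + 1))
          + q ((a + 0) % (k-1) + 1) = 0 := by
        have hs := Finset.sum_range_succ' (fun s => q ((a + s) % (k-1) + 1)) (h-1)
        rw [show h - 1 + 1 = h by omega] at hs
        rw [← hs]
        exact t1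
      have t2' : (∑ s ∈ Finset.range (h-1), q ((a + 1 + s) % (k-1) + 1))
          + q ((a + 1 + (h-1)) % (k-1) + 1) = 0 := by
        have hs := Finset.sum_range_succ (fun s => q ((a + 1 + s) % (k-1) + 1)) (h-1)
        rw [show h - 1 + 1 = h by omega] at hs
        rw [← hs]
        exact t2
      have hsame : ∑ s ∈ Finset.range (h-1), q ((a + (s+1)) % (k-1) + 1)
          = ∑ s ∈ Finset.range (h-1), q ((a + 1 + s) % (k-1) + 1) := by
        apply Finset.sum_congr rfl
        intro s _
        rw [show a + (s+1) = a + 1 + s by omega]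
      have hend : a + 1 + (h - 1) = a + h := by omega
      rw [hend] at t2'
      rw [hsame] at t1'
      simp only [Nat.add_zero] at t1'
      linarith
    have hstep1 : ∀ a : ℕ, q ((a + 1) % (k-1) + 1) = q (a % (k-1) + 1) := by
      intro a
      have e1 : q ((a + 1 + (k-1)) % (k-1) + 1) = q ((a+1) % (k-1) + 1) := by
        rw [Nat.add_mod_right]
      have e2 : a + 1 + (k - 1) = (a + h) + h := by omega
      rw [e2] at e1
      rw [← e1, hshift (a+h), hshift a]
    have hconst : ∀ a : ℕ, q (a % (k-1) + 1) = q (0 % (k-1) + 1) := by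
      intro a
      induction a with
      | zero => rfl
      | succ a ih => rw [hstep1 a]; exact ih
    have hq1 : q (0 % (k-1) + 1) = 0 := by
      have ht0 := hT 0
      have hcongr : ∀ s ∈ Finset.range h, q ((0 + s) % (k-1) + 1) = q (0 % (k-1) + 1) := by
        intro s _
        rw [show (0:ℕ) + s = s from Nat.zero_add s]
        exact hconst s
      rw [Finset.sum_congr rfl hcongr, Finset.sum_const, Finset.card_range,
        nsmul_eq_mul] at ht0
      have hh0 : (h:ℚ) ≠ 0 := Nat.cast_ne_zero.mpr (by omega)
      exact (mul_eq_zero.mp ht0).resolve_left hh0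
    have hqzero : ∀ j, 1 ≤ j → j ≤ k - 1 → q j = 0 := by
      intro j hj1 hj2
      have hc := hconst (j - 1)
      rw [Nat.mod_eq_of_lt (by omega), show j - 1 + 1 = j by omega] at hc
      rw [hc]
      exact hq1
    -- with q = 0, the prefix sums vanish along every path
    have hQzero_sum : ∀ v' u' : ℕ, (∑ j ∈ Finset.Icc 1 (k-1),
        if ((v' ∈ Qset k j) ↔ (u' ∈ Qset k j)) then 0 else q j) = 0 := by
      intro v' u'
      apply Finset.sum_eq_zero
      intro j hj
      rw [Finset.mem_Icc] at hj
      by_cases hcc : (v' ∈ Qset k j) ↔ (u' ∈ Qset k j)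
      · rw [if_pos hcc]
      · rw [if_neg hcc]; exact hqzero j hj.1 hj.2
    have hPpnode : ∀ i ∈ Finset.Icc 1 (k-1), ∀ t, t ≤ h + 1 → Pp (LS.node i t - 1) = 0 := by
      intro i hi t
      induction t with
      | zero =>
          intro _
          rw [hfirst i hi, Nat.sub_self]
          exact hPp0
      | succ t ih =>
          intro hts
          have h0 := hedgeEq i hi t (by omega)
          rw [hQzero_sum (LS.node i t) (LS.node i (t+1))] at h0
          have hprev := ih (by omega)
          rw [hprev] at h0
          linarith
    have hPpall : ∀ x, x ≤ nn k - 1 → Pp x = 0 := by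
      intro x hx
      rcases Nat.eq_zero_or_pos x with rfl | hpos
      · exact hPp0
      rcases Nat.lt_or_ge x (nn k - 1) with hc | hc
      · obtain ⟨i, hi, t, ht1, ht2, hnode⟩ := hcover (x+1) (by omega) (by omega)
        have hv := hPpnode i hi t (by omega)
        rw [hnode, Nat.add_sub_cancel] at hv
        exact hv
      · have hx' : x = nn k - 1 := by omega
        rw [hx']
        exact hPn
    have hpzero : ∀ i', 1 ≤ i' → i' ≤ nn k - 1 → p i' = 0 := by
      intro i' h1 h2
      have hs := Finset.sum_Icc_succ_top (show 1 ≤ (i'-1)+1 by omega) p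
      rw [show i' - 1 + 1 = i' by omega] at hs
      have e1 : Pp i' = Pp (i'-1) + p i' := by
        simp only [hPpdef]
        exact hs
      have z1 := hPpall i' h2
      have z2 := hPpall (i'-1) (by omega)
      rw [z1, z2] at e1
      linarith
    -- conclude y = 0
    funext r
    simp only [Pi.zero_apply]
    rcases Nat.lt_or_ge (r : ℕ) (k-1) with hc | hc
    · have hz : q ((r:ℕ) + 1) = 0 := hqzero _ (by omega) (by omega)
      simp only [hqdef, hwdef, Nat.add_sub_cancel] at hz
      rw [dif_pos r.isLt] at hz
      simpa using hz
    · have hi1 : 1 ≤ (r:ℕ) - (k-1) + 1 := by omega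
      have hi2 : (r:ℕ) - (k-1) + 1 ≤ nn k - 1 := by
        have := r.isLt
        omega
      have hz : p ((r:ℕ) - (k-1) + 1) = 0 := hpzero _ hi1 hi2
      simp only [hpdef, hwdef] at hz
      rw [show k - 1 + ((r:ℕ) - (k-1) + 1) - 1 = (r:ℕ) by omega] at hz
      rw [dif_pos r.isLt] at hz
      simpa using hz
  -- conclude
  have hinj : Function.Injective A.vecMul := by
    intro x y hxy
    have hz : Matrix.vecMul (x - y) A = 0 := by
      simp only [Matrix.sub_vecMul]
      simp only at hxy
      rw [hxy, sub_self]
    exact sub_eq_zero.mp (key _ hz)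
  have hu : IsUnit A := Matrix.vecMul_injective_iff_isUnit.mp hinj
  refine ⟨?_, ?_⟩
  · have := hu.map (Matrix.detMonoidHom)
    simpa using this.ne_zero
  · simpa using Matrix.rank_of_isUnit A hu

end CoverSmallCuts
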